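/- arXiv:1211.1894 — 2 statements merged into one kernel-verified Lean document; each statement's English description precedes it below -/
import Mathlib

section
/- In the setting of the finite-state Poisson equation, the solution admits the probabilistic representation Φ(r) = ∫₀^∞ E_r[g(X_s)] ds, where (X_s) is the Markov chain generated by B started from r, g is centered with respect to the stationary measure μ, and the convergence E_r[Φ(X_t)] → ∫ Φ dμ = 0 as t → ∞ holds. Equivalently, in matrix form: if B has kernel spanned by 1, μB = 0, μg = 0, and e^{tB}g → 0 as t → ∞, then Φ = ∫₀^∞ e^{sB} g ds satisfies BΦ = -g and μΦ = 0. -/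
open Matrix MeasureTheory

attribute [local instance] Matrix.linftyOpNormedAddCommGroup Matrix.linftyOpNormedRing
  Matrix.linftyOpNormedAlgebra

section aux
variable {R : Type*} [Fintype R] [DecidableEq R]

private lemma aux_hasSum (B : Matrix R R ℝ) (t : ℝ) (v : R → ℝ) :
    HasSum (fun n : ℕ => ((n.factorial : ℝ)⁻¹ * t ^ n) • (B ^ n).mulVec v)
      ((NormedSpace.exp (t • B)).mulVec v) := by
  classical
  let L : Matrix R R ℝ →ₗ[ℝ] (R → ℝ) :=
    { toFun := fun M => M.mulVec v
      map_add' := fun M N => Matrix.add_mulVec M N v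
      map_smul' := fun c M => Matrix.smul_mulVec c M v }
  have hL : Continuous L := L.continuous_of_finiteDimensional
  have hs : HasSum (fun n : ℕ => ((n.factorial : ℝ)⁻¹) • (t • B) ^ n) (NormedSpace.exp (t • B)) := by
    rw [NormedSpace.exp_eq_tsum ℝ]
    exact (NormedSpace.expSeries_summable' (𝕂 := ℝ) (t • B)).hasSum
  have := hs.map L hL
  convert this using 2 with n
  simp [L, smul_pow, smul_smul, Matrix.smul_mulVec]
  rfl
end aux

section aux2
variable {R : Type*} [Fintype R] [DecidableEq R]

private lemma aux_comm (B : Matrix R R ℝ) (k : ℕ) (t : ℝ) (v : R → ℝ) :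
    (NormedSpace.exp (t • B)).mulVec ((B ^ k).mulVec v)
      = (B ^ k).mulVec ((NormedSpace.exp (t • B)).mulVec v) := by
  have hc : Commute (NormedSpace.exp (t • B)) (B ^ k) :=
    (((Commute.refl B).smul_left t).pow_right k).exp_left
  rw [Matrix.mulVec_mulVec, Matrix.mulVec_mulVec, hc.eq]

private lemma aux_vecMul_exp (B : Matrix R R ℝ) (μ : R → ℝ) (hμB : Matrix.vecMul μ B = 0)
    (t : ℝ) : Matrix.vecMul μ (NormedSpace.exp (t • B)) = μ := by
  classical
  let L : Matrix R R ℝ →ₗ[ℝ] (R → ℝ) :=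
    { toFun := fun M => Matrix.vecMul μ M
      map_add' := fun M N => Matrix.vecMul_add M N μ
      map_smul' := fun c M => by
        ext j
        simp [Matrix.vecMul, dotProduct, Finset.mul_sum, mul_left_comm] }
  have hL : Continuous L := L.continuous_of_finiteDimensional
  have hs : HasSum (fun n : ℕ => ((n.factorial : ℝ)⁻¹) • (t • B) ^ n)
      (NormedSpace.exp (t • B)) := by
    rw [NormedSpace.exp_eq_tsum ℝ]
    exact (NormedSpace.expSeries_summable' (𝕂 := ℝ) (t • B)).hasSum
  have h2 := hs.map L hL
  simp only [Function.comp_def] at h2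
  have hLs : ∀ (c : ℝ) (M : Matrix R R ℝ), Matrix.vecMul μ (c • M) = c • Matrix.vecMul μ M :=
    fun c M => L.map_smul c M
  have hpow : ∀ n : ℕ, Matrix.vecMul μ (B ^ n) = if n = 0 then μ else 0 := by
    intro n
    induction n with
    | zero => simp
    | succ m ih =>
      rw [pow_succ, ← Matrix.vecMul_vecMul]
      by_cases hm : m = 0
      · subst hm; simp [hμB]
      · simp [hm, ih, Matrix.zero_vecMul]
  have h3 : (fun n : ℕ => L (((n.factorial : ℝ)⁻¹) • (t • B) ^ n))
      = fun n : ℕ => if n = 0 then μ else 0 := by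
    funext n
    show Matrix.vecMul μ _ = _
    rw [smul_pow, hLs, hLs, hpow]
    by_cases hn : n = 0 <;> simp [hn]
  rw [h3] at h2
  exact h2.unique (hasSum_ite_eq 0 μ)

end aux2

section aux3
variable {R : Type*} [Fintype R] [DecidableEq R]

private lemma aux_mem_of_pow (S : Submodule ℝ (R → ℝ)) (B : Matrix R R ℝ) (t : ℝ) (v : R → ℝ)
    (h : ∀ n : ℕ, (B ^ n).mulVec v ∈ S) :
    (NormedSpace.exp (t • B)).mulVec v ∈ S := by
  have hs := aux_hasSum B t v
  have hcl : IsClosed (S : Set (R → ℝ)) := S.closed_of_finiteDimensional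
  refine hcl.mem_of_tendsto hs.tendsto_sum_nat (Filter.Eventually.of_forall ?_)
  intro n
  exact S.sum_mem fun i _ => S.smul_mem _ (h i)

private lemma aux_contraction (V : Submodule ℝ (R → ℝ)) (F : ℝ → Matrix R R ℝ)
    (hd : ∀ v ∈ V, Filter.Tendsto (fun t => (F t).mulVec v) Filter.atTop (nhds 0)) :
    ∃ T : ℝ, 1 ≤ T ∧ ∀ v ∈ V, ‖(F T).mulVec v‖ ≤ (1/2) * ‖v‖ := by
  classical
  set d := Module.finrank ℝ V with hd'
  let b : Module.Basis (Fin d) ℝ V := Module.finBasis ℝ V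
  let clm : Fin d → (V →L[ℝ] ℝ) := fun i => LinearMap.toContinuousLinearMap (b.coord i)
  set C : ℝ := ∑ i, ‖clm i‖ with hC
  have hC0 : 0 ≤ C := Finset.sum_nonneg fun i _ => ContinuousLinearMap.opNorm_nonneg _
  set ε : ℝ := 1 / (2 * (C + 1)) with hε
  have hε0 : 0 < ε := by positivity
  have hev : ∀ᶠ t in Filter.atTop, ∀ i, ‖(F t).mulVec (b i)‖ ≤ ε := by
    rw [Filter.eventually_all]
    intro i
    have h1 : Filter.Tendsto (fun t => ‖(F t).mulVec ((b i : R → ℝ))‖) Filter.atTop (nhds 0) := by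
      simpa using (hd (b i) (b i).2).norm
    exact h1.eventually (eventually_le_nhds hε0)
  obtain ⟨T, hT1, hTb⟩ := ((Filter.eventually_ge_atTop (1:ℝ)).and hev).exists
  refine ⟨T, hT1, fun v hv => ?_⟩
  set x : V := ⟨v, hv⟩ with hx
  have hrepr : v = ∑ i, b.repr x i • (b i : R → ℝ) := by
    have := b.sum_repr x
    have h2 := congrArg (Subtype.val : V → (R → ℝ)) this
    simpa only [Submodule.coe_sum, Submodule.coe_smul] using h2.symm
  have hlin : (F T).mulVec v = ∑ i, b.repr x i • (F T).mulVec (b i : R → ℝ) := by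
    rw [hrepr, ← Matrix.mulVecLin_apply, map_sum]
    simp [Matrix.mulVecLin_apply]
  have hcoef : ∀ i, |b.repr x i| ≤ ‖clm i‖ * ‖v‖ := by
    intro i
    have := (clm i).le_opNorm x
    simpa [clm, Module.Basis.coord_apply, Real.norm_eq_abs] using this
  have hbound : ‖(F T).mulVec v‖ ≤ ∑ i, |b.repr x i| * ε := by
    rw [hlin]
    refine (norm_sum_le _ _).trans (Finset.sum_le_sum fun i _ => ?_)
    rw [norm_smul, Real.norm_eq_abs]
    exact mul_le_mul_of_nonneg_left (hTb i) (abs_nonneg _)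
  rw [← Finset.sum_mul] at hbound
  have h3 : (∑ i, |b.repr x i|) * ε ≤ C * ‖v‖ * ε := by
    have : ∑ i, |b.repr x i| ≤ C * ‖v‖ := by
      rw [hC, Finset.sum_mul]
      exact Finset.sum_le_sum fun i _ => hcoef i
    exact mul_le_mul_of_nonneg_right this hε0.le
  refine (hbound.trans h3).trans ?_
  rw [hε]
  rw [div_eq_mul_inv, mul_comm (C * ‖v‖)]
  have : C * ‖v‖ ≤ (C + 1) * ‖v‖ :=
    mul_le_mul_of_nonneg_right (by linarith) (norm_nonneg _)
  calc (1:ℝ) * (2 * (C + 1))⁻¹ * (C * ‖v‖) ≤ (2 * (C + 1))⁻¹ * ((C+1) * ‖v‖) := by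
        rw [one_mul]
        exact mul_le_mul_of_nonneg_left this (by positivity)
    _ = 1/2 * ‖v‖ := by
        have hC1 : (C + 1) ≠ 0 := by positivity
        field_simp
end aux3

section aux4
variable {R : Type*} [Fintype R] [DecidableEq R]

private lemma aux_linalg (B : Matrix R R ℝ) (μ g : R → ℝ)
    (hB1 : B.mulVec 1 = 0)
    (hker : LinearMap.ker B.mulVecLin = Submodule.span ℝ {(1 : R → ℝ)})
    (hμ1 : ∑ r, μ r = 1)
    (hμB : Matrix.vecMul μ B = 0)
    (hg : ∑ r, μ r * g r = 0) :
    ∃ (Φ₀ : R → ℝ) (C : (R → ℝ) →ₗ[ℝ] (R → ℝ)),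
      B.mulVec Φ₀ = -g ∧ (∑ r, μ r * Φ₀ r = 0) ∧
      ∀ w : R → ℝ, (∑ r, μ r * w r = 0) → C (B.mulVec w) = w := by
  classical
  have hne : Nonempty R := by
    by_contra h
    rw [not_nonempty_iff] at h
    simp at hμ1
  let φ : (R → ℝ) →ₗ[ℝ] ℝ :=
    { toFun := fun v => ∑ r, μ r * v r
      map_add' := fun v w => by simp [mul_add, Finset.sum_add_distrib]
      map_smul' := fun c v => by simp [Finset.mul_sum, mul_left_comm] }
  have hφ1 : φ (1 : R → ℝ) = 1 := by simp [φ, hμ1]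
  have hφB : ∀ u : R → ℝ, φ (B.mulVec u) = 0 := by
    intro u
    have : dotProduct μ (B.mulVec u) = dotProduct (Matrix.vecMul μ B) u :=
      dotProduct_mulVec μ B u
    rw [hμB] at this
    simpa [φ, dotProduct] using this
  have hle : LinearMap.range B.mulVecLin ≤ LinearMap.ker φ := by
    rintro x ⟨u, rfl⟩
    exact hφB u
  have h1ne : (1 : R → ℝ) ≠ 0 := by
    intro h
    have := congrFun h (Classical.arbitrary R)
    simp at this
  have hrank1 : Module.finrank ℝ (LinearMap.ker B.mulVecLin) = 1 := by
    rw [hker]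
    exact finrank_span_singleton h1ne
  have hcard : Module.finrank ℝ (R → ℝ) = Fintype.card R := by
    simp [Module.finrank_pi]
  have hrn : Module.finrank ℝ (LinearMap.range B.mulVecLin)
      + Module.finrank ℝ (LinearMap.ker B.mulVecLin) = Fintype.card R := by
    rw [← hcard]; exact LinearMap.finrank_range_add_finrank_ker _
  have hφsurj : LinearMap.range φ = ⊤ := by
    rw [LinearMap.range_eq_top]
    intro c
    exact ⟨c • 1, by rw [LinearMap.map_smul, hφ1, smul_eq_mul, mul_one]⟩
  have hrnφ : Module.finrank ℝ (LinearMap.range φ)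
      + Module.finrank ℝ (LinearMap.ker φ) = Fintype.card R := by
    rw [← hcard]; exact LinearMap.finrank_range_add_finrank_ker _
  have hrφ : Module.finrank ℝ (LinearMap.range φ) = 1 := by
    rw [hφsurj, finrank_top]
    exact Module.finrank_self ℝ
  have heq : LinearMap.range B.mulVecLin = LinearMap.ker φ := by
    refine Submodule.eq_of_le_of_finrank_le hle ?_
    omega
  -- existence of Φ₀
  have hgker : -g ∈ LinearMap.ker φ := by
    rw [LinearMap.mem_ker]
    have : φ g = 0 := hg
    simp [map_neg, this]
  rw [← heq] at hgker
  obtain ⟨Ψ, hΨ⟩ := hgker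
  -- the inverse map C
  have hBW : ∀ x ∈ LinearMap.ker φ, B.mulVecLin x ∈ LinearMap.ker φ := fun x _ => hle ⟨x, rfl⟩
  let β : LinearMap.ker φ →ₗ[ℝ] LinearMap.ker φ := B.mulVecLin.restrict hBW
  have hβval : ∀ x : LinearMap.ker φ, (β x : R → ℝ) = B.mulVecLin x := fun x => rfl
  have hβinj : Function.Injective β := by
    rw [← LinearMap.ker_eq_bot]
    rw [eq_bot_iff]
    intro x hx
    have hx0 : B.mulVecLin (x : R → ℝ) = 0 := by
      have := congrArg (Subtype.val : LinearMap.ker φ → (R → ℝ)) (LinearMap.mem_ker.mp hx)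
      simpa [hβval] using this
    have : (x : R → ℝ) ∈ LinearMap.ker B.mulVecLin := LinearMap.mem_ker.mpr hx0
    rw [hker, Submodule.mem_span_singleton] at this
    obtain ⟨c, hc⟩ := this
    have hφx : φ (x : R → ℝ) = 0 := x.2
    rw [← hc] at hφx
    rw [LinearMap.map_smul, hφ1, smul_eq_mul, mul_one] at hφx
    subst hφx
    have : (x : R → ℝ) = 0 := by rw [← hc]; simp
    simpa [Submodule.mem_bot] using Subtype.ext this
  have hβsurj : Function.Surjective β := LinearMap.injective_iff_surjective.mp hβinj
  let βe : LinearMap.ker φ ≃ₗ[ℝ] LinearMap.ker φ := LinearEquiv.ofBijective β ⟨hβinj, hβsurj⟩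
  let p : (R → ℝ) →ₗ[ℝ] (R → ℝ) :=
    LinearMap.id - (LinearMap.toSpanSingleton ℝ (R → ℝ) 1).comp φ
  have hp : ∀ v, p v = v - φ v • 1 := fun v => rfl
  have hpmem : ∀ v, p v ∈ LinearMap.ker φ := by
    intro v
    rw [LinearMap.mem_ker, hp, map_sub, LinearMap.map_smul, hφ1]
    simp
  let π : (R → ℝ) →ₗ[ℝ] LinearMap.ker φ := p.codRestrict (LinearMap.ker φ) hpmem
  let C : (R → ℝ) →ₗ[ℝ] (R → ℝ) :=
    (LinearMap.ker φ).subtype ∘ₗ (βe.symm.toLinearMap ∘ₗ π)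
  refine ⟨Ψ - φ Ψ • 1, C, ?_, ?_, ?_⟩
  · have h2 : B.mulVecLin (Ψ - φ Ψ • 1) = -g := by
      rw [map_sub, LinearMap.map_smul, hΨ]
      have h1 : B.mulVecLin (1 : R → ℝ) = 0 := hB1
      rw [h1]
      simp
    simpa [Matrix.mulVecLin_apply] using h2
  · show φ (Ψ - φ Ψ • 1) = 0
    rw [map_sub, LinearMap.map_smul, hφ1]
    simp
  · intro w hw
    have hw' : φ w = 0 := hw
    have h1 : π (B.mulVec w) = β ⟨w, hw'⟩ := by
      apply Subtype.ext
      show p (B.mulVec w) = _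
      rw [hp, hφB]
      simp [hβval, Matrix.mulVecLin_apply]
    show (LinearMap.ker φ).subtype (βe.symm (π (B.mulVec w))) = w
    rw [h1]
    have h2 : β ⟨w, hw'⟩ = βe ⟨w, hw'⟩ := rfl
    rw [h2, LinearEquiv.symm_apply_apply]
    rfl
end aux4

/-- Probabilistic representation of the solution of the Poisson equation: if B has
kernel spanned by 1, μB = 0, μg = 0, and e^{tB}g → 0 as t → ∞, then
Φ = ∫₀^∞ e^{sB} g ds satisfies BΦ = -g and μΦ = 0. -/
theorem stmt_7 {R : Type*} [Fintype R] [DecidableEq R]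
    (B : Matrix R R ℝ) (μ g : R → ℝ)
    (hB1 : B.mulVec 1 = 0)
    (hker : LinearMap.ker B.mulVecLin = Submodule.span ℝ {(1 : R → ℝ)})
    (hμ : ∀ r, 0 ≤ μ r) (hμ1 : ∑ r, μ r = 1)
    (hμB : Matrix.vecMul μ B = 0)
    (hg : ∑ r, μ r * g r = 0)
    (hdecay : Filter.Tendsto (fun t : ℝ => (NormedSpace.exp (t • B)).mulVec g)
      Filter.atTop (nhds 0)) :
    B.mulVec (∫ s in Set.Ioi (0:ℝ), (NormedSpace.exp (s • B)).mulVec g) = -g ∧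
    ∑ r, μ r * (∫ s in Set.Ioi (0:ℝ), (NormedSpace.exp (s • B)).mulVec g) r = 0 := by
  classical
  set e : ℝ → Matrix R R ℝ := fun t => NormedSpace.exp (t • B) with he
  -- semigroup property
  have hsemi : ∀ s t : ℝ, e (s + t) = e s * e t := by
    intro s t
    rw [he]
    simp only [add_smul]
    exact NormedSpace.exp_add_of_commute (((Commute.refl B).smul_left s).smul_right t)
  have he0 : e 0 = 1 := by simp [he, NormedSpace.exp_zero]
  -- the orbit subspace
  set V : Submodule ℝ (R → ℝ) := Submodule.span ℝ (Set.range fun k : ℕ => (B ^ k).mulVec g)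
    with hV
  have hgV : g ∈ V := by
    have : (B ^ 0).mulVec g ∈ V := Submodule.subset_span (Set.mem_range_self 0)
    simpa using this
  have hVB : ∀ v ∈ V, B.mulVec v ∈ V := by
    intro v hv
    induction hv using Submodule.span_induction with
    | mem x hx =>
      obtain ⟨k, rfl⟩ := hx
      rw [Matrix.mulVec_mulVec, ← pow_succ']
      exact Submodule.subset_span (Set.mem_range_self (k + 1))
    | zero => simpa [Matrix.mulVec_zero] using V.zero_mem
    | add x y hx hy ihx ihy => simpa [Matrix.mulVec_add] using V.add_mem ihx ihy
    | smul c x hx ihx => simpa [Matrix.mulVec_smul] using V.smul_mem c ihx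
  have hVpow : ∀ (n : ℕ), ∀ v ∈ V, (B ^ n).mulVec v ∈ V := by
    intro n
    induction n with
    | zero => intro v hv; simpa using hv
    | succ m ih =>
      intro v hv
      have h1 := hVB _ (ih v hv)
      rw [Matrix.mulVec_mulVec, ← pow_succ'] at h1
      exact h1
  have hVe : ∀ (t : ℝ), ∀ v ∈ V, (e t).mulVec v ∈ V := fun t v hv =>
    aux_mem_of_pow V B t v fun n => hVpow n v hv
  have hVdecay : ∀ v ∈ V, Filter.Tendsto (fun t => (e t).mulVec v) Filter.atTop (nhds 0) := by
    intro v hv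
    induction hv using Submodule.span_induction with
    | mem x hx =>
      obtain ⟨k, rfl⟩ := hx
      have heq2 : (fun t => (e t).mulVec ((B ^ k).mulVec g))
          = fun t => (B ^ k).mulVec ((e t).mulVec g) := by
        funext t; exact aux_comm B k t g
      rw [heq2]
      have hcont : Continuous fun w : R → ℝ => (B ^ k).mulVec w :=
        ((B ^ k).mulVecLin).continuous_of_finiteDimensional
      have := (hcont.tendsto 0).comp hdecay
      simpa [Function.comp_def, Matrix.mulVec_zero, Matrix.mulVec_mulVec] using this
    | zero => simpa [Matrix.mulVec_zero] using tendsto_const_nhds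
    | add x y hx hy ihx ihy => simpa [Matrix.mulVec_add] using ihx.add ihy
    | smul c x hx ihx => simpa [Matrix.mulVec_smul] using ihx.const_smul c
  -- contraction time
  obtain ⟨T, hT1, hTc⟩ := aux_contraction V e hVdecay
  have hT0 : (0:ℝ) < T := lt_of_lt_of_le one_pos hT1
  -- iterated contraction
  have hiter : ∀ (n : ℕ), ∀ v ∈ V, ‖(e ((n : ℝ) * T)).mulVec v‖ ≤ (1/2 : ℝ) ^ n * ‖v‖ := by
    intro n
    induction n with
    | zero => intro v hv; simp [he0, Matrix.one_mulVec]
    | succ m ih =>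
      intro v hv
      have hsplit : ((m + 1 : ℕ) : ℝ) * T = T + (m : ℝ) * T := by push_cast; ring
      rw [hsplit, hsemi, ← Matrix.mulVec_mulVec]
      calc ‖(e T).mulVec ((e ((m:ℝ) * T)).mulVec v)‖
          ≤ (1/2 : ℝ) * ‖(e ((m:ℝ) * T)).mulVec v‖ :=
            hTc _ (hVe _ v hv)
        _ ≤ (1/2 : ℝ) * ((1/2:ℝ) ^ m * ‖v‖) := by
            have := ih v hv
            nlinarith [norm_nonneg ((e ((m:ℝ) * T)).mulVec v)]
        _ = (1/2 : ℝ) ^ (m+1) * ‖v‖ := by ring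
  -- continuity and bound on [0, T]
  have hde : ∀ t : ℝ, HasDerivAt e (e t * B) t := fun t => hasDerivAt_exp_smul_const B t
  have hecont : Continuous e := by
    rw [continuous_iff_continuousAt]
    exact fun t => (hde t).continuousAt
  obtain ⟨K, hK⟩ := isCompact_Icc.exists_bound_of_continuousOn
    (s := Set.Icc (0:ℝ) T) hecont.continuousOn
  set K' : ℝ := max K 0 with hK'
  have hK'0 : 0 ≤ K' := le_max_right _ _
  have hKb : ∀ s ∈ Set.Icc (0:ℝ) T, ‖e s‖ ≤ K' := fun s hs =>
    (hK s hs).trans (le_max_left _ _)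
  -- pointwise decay bound
  have hdb : ∀ s : ℝ, 0 ≤ s →
      ‖(e s).mulVec g‖ ≤ (K' * ‖g‖) * (1/2 : ℝ) ^ (⌊s / T⌋₊) := by
    intro s hs
    set n : ℕ := ⌊s / T⌋₊ with hn
    have hdiv0 : 0 ≤ s / T := div_nonneg hs hT0.le
    have h1 : (n : ℝ) ≤ s / T := Nat.floor_le hdiv0
    have h2 : s / T < (n : ℝ) + 1 := Nat.lt_floor_add_one _
    have hnT : (n : ℝ) * T ≤ s := (le_div_iff₀ hT0).mp h1
    have hsnT : s - (n : ℝ) * T ≤ T := by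
      have : s < ((n : ℝ) + 1) * T := (div_lt_iff₀ hT0).mp h2
      nlinarith
    have hsplit : s = (s - (n : ℝ) * T) + (n : ℝ) * T := by ring
    calc ‖(e s).mulVec g‖
        = ‖(e (s - (n:ℝ) * T)).mulVec ((e ((n:ℝ) * T)).mulVec g)‖ := by
          rw [Matrix.mulVec_mulVec, ← hsemi]
          exact congrArg (fun u => ‖(e u).mulVec g‖) hsplit
      _ ≤ ‖e (s - (n:ℝ) * T)‖ * ‖(e ((n:ℝ) * T)).mulVec g‖ :=
          Matrix.linfty_opNorm_mulVec _ _
      _ ≤ K' * ((1/2:ℝ) ^ n * ‖g‖) := by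
          refine mul_le_mul (hKb _ ⟨by linarith, hsnT⟩) (hiter n g hgV)
            (norm_nonneg _) hK'0
      _ = (K' * ‖g‖) * (1/2:ℝ) ^ n := by ring
  -- integrability
  have hcontvec : Continuous fun s => (e s).mulVec g := by
    have hcont2 : Continuous fun M : Matrix R R ℝ => M.mulVec g := by
      let L : Matrix R R ℝ →ₗ[ℝ] (R → ℝ) :=
        { toFun := fun M => M.mulVec g
          map_add' := fun M N => Matrix.add_mulVec M N g
          map_smul' := fun c M => Matrix.smul_mulVec c M g }
      exact L.continuous_of_finiteDimensional
    exact hcont2.comp hecont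
  have hexpbound : ∀ s : ℝ, 0 ≤ s →
      (1/2 : ℝ) ^ (⌊s / T⌋₊) ≤ 2 * Real.exp (-(Real.log 2 / T) * s) := by
    intro s hs
    set n : ℕ := ⌊s / T⌋₊ with hn
    have hpow : (1/2 : ℝ) ^ n = Real.exp (-(n : ℝ) * Real.log 2) := by
      rw [← Real.exp_log (show (0:ℝ) < 1/2 by norm_num)]
      rw [← Real.exp_nat_mul]
      congr 1
      rw [one_div, Real.log_inv]
      ring
    rw [hpow]
    have h2 : s / T < (n : ℝ) + 1 := Nat.lt_floor_add_one _
    have hlog2 : 0 < Real.log 2 := Real.log_pos one_lt_two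
    have harg : -(n : ℝ) * Real.log 2 ≤ Real.log 2 + (-(Real.log 2 / T) * s) := by
      have h3 : s / T - 1 < (n : ℝ) := by linarith
      have h4 : (s / T - 1) * Real.log 2 ≤ (n : ℝ) * Real.log 2 :=
        mul_le_mul_of_nonneg_right h3.le hlog2.le
      have h5 : (s / T) * Real.log 2 = (Real.log 2 / T) * s := by
        field_simp
      nlinarith
    calc Real.exp (-(n:ℝ) * Real.log 2)
        ≤ Real.exp (Real.log 2 + (-(Real.log 2 / T) * s)) := Real.exp_le_exp.mpr harg
      _ = 2 * Real.exp (-(Real.log 2 / T) * s) := by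
          rw [Real.exp_add, Real.exp_log two_pos]
  have hInt : IntegrableOn (fun s => (e s).mulVec g) (Set.Ioi (0:ℝ)) := by
    have hb : 0 < Real.log 2 / T := div_pos (Real.log_pos one_lt_two) hT0
    have hintexp : IntegrableOn
        (fun s => (2 * (K' * ‖g‖)) * Real.exp (-(Real.log 2 / T) * s)) (Set.Ioi (0:ℝ)) :=
      (exp_neg_integrableOn_Ioi 0 hb).const_mul _
    refine Integrable.mono' hintexp hcontvec.aestronglyMeasurable.restrict ?_
    rw [ae_restrict_iff' measurableSet_Ioi]
    refine Filter.Eventually.of_forall fun s hs => ?_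
    have hs0 : (0:ℝ) ≤ s := le_of_lt hs
    calc ‖(e s).mulVec g‖ ≤ (K' * ‖g‖) * (1/2:ℝ) ^ (⌊s / T⌋₊) := hdb s hs0
      _ ≤ (K' * ‖g‖) * (2 * Real.exp (-(Real.log 2 / T) * s)) := by
          refine mul_le_mul_of_nonneg_left (hexpbound s hs0) ?_
          positivity
      _ = (2 * (K' * ‖g‖)) * Real.exp (-(Real.log 2 / T) * s) := by ring
  -- the Poisson solution
  obtain ⟨Φ₀, C, hΦB, hΦμ, hC⟩ := aux_linalg B μ g hB1 hker hμ1 hμB hg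
  -- derivative of t ↦ e t *ᵥ Φ₀
  let L : Matrix R R ℝ →ₗ[ℝ] (R → ℝ) :=
    { toFun := fun M => M.mulVec Φ₀
      map_add' := fun M N => Matrix.add_mulVec M N Φ₀
      map_smul' := fun c M => Matrix.smul_mulVec c M Φ₀ }
  let Lc : Matrix R R ℝ →L[ℝ] (R → ℝ) := LinearMap.toContinuousLinearMap L
  have hF : ∀ t : ℝ, HasDerivAt (fun u => (e u).mulVec Φ₀) (-(e t).mulVec g) t := by
    intro t
    have h1 : HasDerivAt (fun u => Lc (e u)) (Lc (e t * B)) t :=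
      Lc.hasFDerivAt.comp_hasDerivAt t (hde t)
    have h2 : Lc (e t * B) = -(e t).mulVec g := by
      show (e t * B).mulVec Φ₀ = _
      rw [← Matrix.mulVec_mulVec, hΦB, Matrix.mulVec_neg]
    rw [h2] at h1
    exact h1
  -- FTC
  have hFTC : ∀ x : ℝ, (∫ s in (0:ℝ)..x, (e s).mulVec g)
      = Φ₀ - (e x).mulVec Φ₀ := by
    intro x
    have hii : IntervalIntegrable (fun s => -(e s).mulVec g) volume 0 x :=
      (hcontvec.neg).intervalIntegrable 0 x
    have h1 := intervalIntegral.integral_eq_sub_of_hasDerivAt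
      (f := fun u => (e u).mulVec Φ₀) (f' := fun s => -(e s).mulVec g)
      (fun t _ => hF t) hii
    rw [intervalIntegral.integral_neg] at h1
    have h1' : -(∫ s in (0:ℝ)..x, (e s).mulVec g) = (e x).mulVec Φ₀ - (e 0).mulVec Φ₀ := h1
    have h2 : (e 0).mulVec Φ₀ = Φ₀ := by rw [he0, Matrix.one_mulVec]
    rw [h2] at h1'
    have := congrArg Neg.neg h1'
    rw [neg_neg, neg_sub] at this
    exact this
  -- decay of e t *ᵥ Φ₀
  have hΦdecay : Filter.Tendsto (fun t => (e t).mulVec Φ₀) Filter.atTop (nhds 0) := by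
    have hkey : ∀ t : ℝ, (e t).mulVec Φ₀ = C (-(e t).mulVec g) := by
      intro t
      have hμf : ∑ r, μ r * ((e t).mulVec Φ₀) r = 0 := by
        have hdp : dotProduct μ ((e t).mulVec Φ₀)
            = dotProduct (Matrix.vecMul μ (e t)) Φ₀ :=
          dotProduct_mulVec μ (e t) Φ₀
        rw [aux_vecMul_exp B μ hμB t] at hdp
        have : dotProduct μ Φ₀ = 0 := hΦμ
        rw [this] at hdp
        exact hdp
      have hBf : B.mulVec ((e t).mulVec Φ₀) = -(e t).mulVec g := by
        have h1 : (e t).mulVec ((B ^ 1).mulVec Φ₀) = (B ^ 1).mulVec ((e t).mulVec Φ₀) :=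
          aux_comm B 1 t Φ₀
        simp only [pow_one] at h1
        rw [hΦB, Matrix.mulVec_neg] at h1
        exact h1.symm
      have := hC ((e t).mulVec Φ₀) hμf
      rw [hBf] at this
      exact this.symm
    have hCc : Continuous C := C.continuous_of_finiteDimensional
    have hdn : Filter.Tendsto (fun t : ℝ => -(e t).mulVec g) Filter.atTop (nhds 0) := by
      simpa using hdecay.neg
    have h1 : Filter.Tendsto (fun t => C (-(e t).mulVec g)) Filter.atTop (nhds 0) := by
      have := (hCc.tendsto 0).comp hdn
      simpa [Function.comp_def, map_zero] using this
    simpa only [hkey] using h1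
  -- identify the improper integral
  have hlim1 : Filter.Tendsto (fun x : ℝ => ∫ s in (0:ℝ)..x, (e s).mulVec g)
      Filter.atTop (nhds (∫ s in Set.Ioi (0:ℝ), (e s).mulVec g)) :=
    intervalIntegral_tendsto_integral_Ioi 0 hInt Filter.tendsto_id
  have hlim2 : Filter.Tendsto (fun x : ℝ => ∫ s in (0:ℝ)..x, (e s).mulVec g)
      Filter.atTop (nhds Φ₀) := by
    simp only [hFTC]
    have := (tendsto_const_nhds (x := Φ₀) (f := Filter.atTop (α := ℝ))).sub hΦdecay
    simpa using this
  have hval : (∫ s in Set.Ioi (0:ℝ), (e s).mulVec g) = Φ₀ :=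
    tendsto_nhds_unique hlim1 hlim2
  rw [hval]
  exact ⟨hΦB, hΦμ⟩
end

section
/- Let B be the generator of an irreducible continuous-time Markov chain on a finite state space R with stationary distribution μ, and suppose the solvability conditions μg = 0 hold for g : R → ℝ. The solution of the Poisson equation can be written as Φ = -(μ*μ + B*B)^{-1} B* g; i.e. this Φ satisfies BΦ = -g and μΦ = 0. -/
open Matrix

/-- First representation of the diffusion operator: under the solvability conditions,
Φ = -(μ*μ + B*B)⁻¹ B* g solves the Poisson equation BΦ = -g with μΦ = 0. -/
theorem stmt_17 {R : Type*} [Fintype R] [DecidableEq R]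
    (B : Matrix R R ℝ) (μ g : R → ℝ)
    (hB1 : B.mulVec 1 = 0)
    (hker : LinearMap.ker B.mulVecLin = Submodule.span ℝ {(1 : R → ℝ)})
    (hμ : ∀ r, 0 ≤ μ r) (hμ1 : ∑ r, μ r = 1)
    (hμB : Matrix.vecMul μ B = 0)
    (hg : ∑ r, g r * μ r = 0) :
    B.mulVec (-(Matrix.vecMulVec μ μ + Bᵀ * B)⁻¹.mulVec (Bᵀ.mulVec g)) = -g ∧
    ∑ r, μ r * (-(Matrix.vecMulVec μ μ + Bᵀ * B)⁻¹.mulVec (Bᵀ.mulVec g)) r = 0 := by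
  classical
  set M : Matrix R R ℝ := Matrix.vecMulVec μ μ + Bᵀ * B with hM
  have hvmv : ∀ x : R → ℝ, (Matrix.vecMulVec μ μ).mulVec x = (μ ⬝ᵥ x) • μ := by
    intro x; ext i
    simp only [Matrix.mulVec, Matrix.vecMulVec_apply, dotProduct, Pi.smul_apply,
      smul_eq_mul, Finset.sum_mul, Finset.mul_sum]
    exact Finset.sum_congr rfl fun j _ => by ring
  have hμone : μ ⬝ᵥ (1 : R → ℝ) = 1 := by
    simpa [dotProduct] using hμ1
  -- the linear functional x ↦ μ ⬝ᵥ x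
  let f : (R → ℝ) →ₗ[ℝ] ℝ :=
    { toFun := fun x => μ ⬝ᵥ x
      map_add' := fun x y => by simp [dotProduct, Finset.sum_add_distrib, mul_add]
      map_smul' := fun a x => by
        simp [dotProduct, Finset.mul_sum]
        exact Finset.sum_congr rfl fun j _ => by ring }
  -- invertibility of M
  have hEne : Nonempty R := by
    by_contra h
    rw [not_nonempty_iff] at h
    simp at hμ1
  have hzero : ∀ x : R → ℝ, M.mulVec x = 0 → x = 0 := by
    intro x hx
    have h0 : x ⬝ᵥ M.mulVec x = 0 := by rw [hx, dotProduct_zero]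
    have hsplit : x ⬝ᵥ M.mulVec x = (μ ⬝ᵥ x) * (μ ⬝ᵥ x) + (B.mulVec x) ⬝ᵥ (B.mulVec x) := by
      rw [hM, Matrix.add_mulVec, dotProduct_add, hvmv, ← Matrix.mulVec_mulVec,
        Matrix.dotProduct_mulVec x Bᵀ, Matrix.vecMul_transpose, dotProduct_smul]
      simp [dotProduct_comm, mul_comm]
    have hy : (B.mulVec x) ⬝ᵥ (B.mulVec x) = ∑ i, (B.mulVec x i) ^ 2 := by
      simp [dotProduct, sq]
    have hsum : (μ ⬝ᵥ x) ^ 2 + ∑ i, (B.mulVec x i) ^ 2 = 0 := by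
      rw [sq, ← hy, ← hsplit, h0]
    have h1 : (0:ℝ) ≤ (μ ⬝ᵥ x) ^ 2 := sq_nonneg _
    have h2 : (0:ℝ) ≤ ∑ i, (B.mulVec x i) ^ 2 :=
      Finset.sum_nonneg fun i _ => sq_nonneg _
    have hμx : μ ⬝ᵥ x = 0 := by
      have : (μ ⬝ᵥ x) ^ 2 = 0 := le_antisymm (by linarith) h1
      exact pow_eq_zero_iff (n := 2) (by norm_num) |>.mp this
    have hBx : B.mulVec x = 0 := by
      have hs : ∑ i, (B.mulVec x i) ^ 2 = 0 := le_antisymm (by linarith) h2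
      funext i
      have := (Finset.sum_eq_zero_iff_of_nonneg (fun i _ => sq_nonneg (B.mulVec x i))).mp hs
        i (Finset.mem_univ i)
      exact pow_eq_zero_iff (n := 2) (by norm_num) |>.mp this
    have hxker : x ∈ LinearMap.ker B.mulVecLin := by
      simpa [Matrix.mulVecLin] using hBx
    rw [hker, Submodule.mem_span_singleton] at hxker
    obtain ⟨c, hc⟩ := hxker
    have : μ ⬝ᵥ x = c := by
      rw [← hc]
      simp [dotProduct_smul, hμone]
    rw [← hc, this.symm.trans hμx]
    simp
  have hMdet : IsUnit M.det := by
    rw [← Matrix.isUnit_iff_isUnit_det, ← Matrix.mulVec_injective_iff_isUnit]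
    intro x y hxy
    have := hzero (x - y) (by rw [Matrix.mulVec_sub, hxy, sub_self])
    exact sub_eq_zero.mp this
  -- g is in the range of B.mulVecLin
  have hrange : LinearMap.range B.mulVecLin = LinearMap.ker f := by
    have hle : LinearMap.range B.mulVecLin ≤ LinearMap.ker f := by
      rintro _ ⟨y, rfl⟩
      show μ ⬝ᵥ B.mulVec y = 0
      rw [Matrix.dotProduct_mulVec, hμB, zero_dotProduct]
    have h1ne : (1 : R → ℝ) ≠ 0 := by
      intro h
      have := congrFun h (Classical.choice hEne)
      norm_num at this
    have hkerdim : Module.finrank ℝ (LinearMap.ker B.mulVecLin) = 1 := by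
      rw [hker]
      exact finrank_span_singleton h1ne
    have hrk := LinearMap.finrank_range_add_finrank_ker B.mulVecLin
    have hrf := LinearMap.finrank_range_add_finrank_ker f
    have hfsurj : LinearMap.range f = ⊤ := by
      rw [LinearMap.range_eq_top]
      intro a
      exact ⟨a • 1, by show μ ⬝ᵥ (a • (1 : R → ℝ)) = a; rw [dotProduct_smul, hμone, smul_eq_mul, mul_one]⟩
    have hrfr : Module.finrank ℝ (LinearMap.range f) = 1 := by
      rw [hfsurj, finrank_top]; exact Module.finrank_self ℝ
    apply Submodule.eq_of_le_of_finrank_eq hle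
    have hd : Module.finrank ℝ (R → ℝ) = Module.finrank ℝ (R → ℝ) := rfl
    omega
  have hgmem : -g ∈ LinearMap.range B.mulVecLin := by
    rw [hrange]
    have : f g = 0 := by
      show μ ⬝ᵥ g = 0
      rw [← hg]
      exact Finset.sum_congr rfl fun r _ => mul_comm _ _
    simp [LinearMap.mem_ker, this]
  obtain ⟨Ψ₀, hΨ₀⟩ := hgmem
  set Ψ : R → ℝ := Ψ₀ - (μ ⬝ᵥ Ψ₀) • 1 with hΨdef
  have hBΨ : B.mulVec Ψ = -g := by
    have : B.mulVec Ψ₀ = -g := hΨ₀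
    rw [hΨdef, Matrix.mulVec_sub, Matrix.mulVec_smul, hB1, this]
    simp
  have hμΨ : μ ⬝ᵥ Ψ = 0 := by
    rw [hΨdef]
    simp [dotProduct_sub, dotProduct_smul, hμone]
  have hMΨ : M.mulVec Ψ = -(Bᵀ.mulVec g) := by
    rw [hM, Matrix.add_mulVec, hvmv, hμΨ, ← Matrix.mulVec_mulVec, hBΨ]
    simp [Matrix.mulVec_neg]
  have hkey : -(M⁻¹.mulVec (Bᵀ.mulVec g)) = Ψ := by
    have : M⁻¹.mulVec (M.mulVec Ψ) = Ψ := by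
      rw [Matrix.mulVec_mulVec, Matrix.nonsing_inv_mul M hMdet, Matrix.one_mulVec]
    rw [← this, hMΨ, Matrix.mulVec_neg]
  constructor
  · rw [hkey, hBΨ]
  · rw [hkey]
    simpa [dotProduct] using hμΨ
end
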